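/- The Price of Anarchy of the two-user selfish routing game on the load-balancing network, i.e., the ratio of the total cost J₁ + J₂ at the Nash equilibrium (r/2 + ζ, r/2 + ζ) to the minimum of J₁ + J₂ over [0,r]², equals 1 + ((r/2 − ζ)c)/(rL), where ζ = cδ/(2L). -/

import Mathlib

/-- Elbow latency function with parameters `r, L, δ`. -/
noncomputable def T (r L δ x : ℝ) : ℝ := max 0 (L / δ * (x - r) + L)

/-- Cost of user 1 in the two-user load-balancing game. -/
noncomputable def J₁ (r L δ c x₁ x₂ : ℝ) : ℝ :=
  x₁ * T r L δ (x₁ + (r - x₂)) + (r - x₁) * (c + T r L δ (x₂ + (r - x₁)))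

/-- Cost of user 2 in the two-user load-balancing game. -/
noncomputable def J₂ (r L δ c x₁ x₂ : ℝ) : ℝ :=
  x₂ * T r L δ (x₂ + (r - x₁)) + (r - x₂) * (c + T r L δ (x₁ + (r - x₂)))

/-- Tangent-line lower bound for `x * T x` at `x = r`. -/
lemma key_tangent (r L δ : ℝ) (hδ : 0 < δ) (hL : 0 < L) (hr : 0 < r) (x : ℝ) :
    r * L + L / δ * (r + δ) * (x - r) ≤ x * T r L δ x := by
  have ht0 : 0 < L / δ := div_pos hL hδ
  have ht : L / δ * δ = L := by field_simp
  unfold T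
  rcases le_total (L / δ * (x - r) + L) 0 with h | h
  · rw [max_eq_left h, mul_zero]
    have hx : x - r ≤ -δ := by nlinarith
    nlinarith [mul_le_mul_of_nonneg_left hx
      (le_of_lt (mul_pos ht0 (by linarith : (0:ℝ) < r + δ)))]
  · rw [max_eq_right h]
    nlinarith [mul_nonneg (le_of_lt ht0) (sq_nonneg (x - r))]

theorem price_of_anarchy_formula
    (r L δ c : ℝ) (hδ : 0 < δ) (hδL : δ < L) (hLc : L < c) (hcδ : c * δ < r * L)
    (ζ : ℝ) (hζ : ζ = c * δ / (2 * L)) :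
    (J₁ r L δ c (r / 2 + ζ) (r / 2 + ζ) + J₂ r L δ c (r / 2 + ζ) (r / 2 + ζ)) /
      sInf ((fun p : ℝ × ℝ => J₁ r L δ c p.1 p.2 + J₂ r L δ c p.1 p.2) ''
        (Set.Icc (0 : ℝ) r ×ˢ Set.Icc (0 : ℝ) r)) =
    1 + (r / 2 - ζ) * c / (r * L) := by
  have hL : 0 < L := hδ.trans hδL
  have hc : 0 < c := hL.trans hLc
  have hr : 0 < r := by nlinarith [mul_pos hc hδ]
  have hTr : T r L δ r = L := by
    unfold T; rw [sub_self, mul_zero, zero_add, max_eq_right hL.le]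
  -- the value at the Nash equilibrium
  have harg : r / 2 + ζ + (r - (r / 2 + ζ)) = r := by ring
  have hnum : J₁ r L δ c (r / 2 + ζ) (r / 2 + ζ) + J₂ r L δ c (r / 2 + ζ) (r / 2 + ζ)
      = 2 * r * L + (r - 2 * ζ) * c := by
    simp only [J₁, J₂, harg, hTr]; ring
  -- the lower bound on the square
  have hlb : ∀ p ∈ Set.Icc (0 : ℝ) r ×ˢ Set.Icc (0 : ℝ) r,
      2 * r * L ≤ J₁ r L δ c p.1 p.2 + J₂ r L δ c p.1 p.2 := by
    rintro ⟨x₁, x₂⟩ ⟨⟨h10, h11⟩, ⟨h20, h21⟩⟩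
    have k1 := key_tangent r L δ hδ hL hr (x₁ + (r - x₂))
    have k2 := key_tangent r L δ hδ hL hr (x₂ + (r - x₁))
    have hcr : 0 ≤ c * (2 * r - x₁ - x₂) :=
      mul_nonneg hc.le (by linarith)
    simp only [J₁, J₂]
    nlinarith [k1, k2, hcr]
  -- the infimum equals 2 r L
  have hmem : 2 * r * L ∈ ((fun p : ℝ × ℝ => J₁ r L δ c p.1 p.2 + J₂ r L δ c p.1 p.2) ''
      (Set.Icc (0 : ℝ) r ×ˢ Set.Icc (0 : ℝ) r)) := by
    refine ⟨(r, r), ⟨⟨le_of_lt hr, le_refl r⟩, ⟨le_of_lt hr, le_refl r⟩⟩, ?_⟩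
    simp only [J₁, J₂]
    have : r + (r - r) = r := by ring
    rw [this, hTr]; ring
  have hInf : sInf ((fun p : ℝ × ℝ => J₁ r L δ c p.1 p.2 + J₂ r L δ c p.1 p.2) ''
      (Set.Icc (0 : ℝ) r ×ˢ Set.Icc (0 : ℝ) r)) = 2 * r * L := by
    apply le_antisymm
    · exact csInf_le ⟨2 * r * L, by rintro y ⟨p, hp, rfl⟩; exact hlb p hp⟩ hmem
    · exact le_csInf ⟨_, hmem⟩ (by rintro y ⟨p, hp, rfl⟩; exact hlb p hp)
  rw [hnum, hInf, hζ]
  have hrL : r * L ≠ 0 := by positivity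
  field_simp
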